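/- Over any commutative ring K with unity, if a word w satisfies l*(w) = 0 then the number of distinct letters occurring in w is at most ⌈|w|/2⌉. -/

import Mathlib

open MonoidAlgebra

/-- The word `w` viewed as a monomial in the free associative algebra `K⟨A⟩`. -/
noncomputable def word (K : Type*) [CommRing K] {A : Type*} (w : List A) :
    MonoidAlgebra K (FreeMonoid A) :=
  MonoidAlgebra.single (FreeMonoid.ofList w) 1

/-- The adjoint `l*` of the left-normed Lie bracketing, defined by the recursion
`l*(ε) = 0`, `l*(a) = a`, `l*(aub) = l*(au)·b − l*(ub)·a`. -/
noncomputable def lstar (K : Type*) [CommRing K] {A : Type*} :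
    List A → MonoidAlgebra K (FreeMonoid A)
  | [] => 0
  | [a] => word K [a]
  | a :: b :: r =>
      lstar K (a :: (b :: r).dropLast) * word K [(b :: r).getLast (by simp)]
        - lstar K (b :: r) * word K [a]
  termination_by w => w.length
  decreasing_by
    · simp [List.length_dropLast]
    · simp

namespace LstarAux

variable {A : Type*} [DecidableEq A]

/-- Number of ways to parse `t` as a shuffle (interleaving) of `x` and `y`. -/
def Sh : List A → List A → List A → ℕ
  | x, y, z :: t =>
      (if x.head? = some z then Sh x.tail y t else 0) +
      (if y.head? = some z then Sh x y.tail t else 0)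
  | x, y, [] => if x = [] ∧ y = [] then 1 else 0

lemma Sh_self : ∀ x : List A, Sh x [] x = 1 := by
  intro x
  induction x with
  | nil => simp [Sh]
  | cons c x ih => simp [Sh, ih]

lemma Sh_multiset : ∀ (t x y : List A), Sh x y t ≠ 0 →
    (x : Multiset A) + (y : Multiset A) = (t : Multiset A) := by
  intro t
  induction t with
  | nil =>
    intro x y h
    simp only [Sh] at h
    split at h
    · rcases ‹x = [] ∧ y = []› with ⟨rfl, rfl⟩; simp
    · simp at h
  | cons z t ih =>
    intro x y h
    simp only [Sh] at h
    have h' : (if x.head? = some z then Sh x.tail y t else 0) ≠ 0 ∨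
        (if y.head? = some z then Sh x y.tail t else 0) ≠ 0 := by
      by_contra hc
      push_neg at hc
      omega
    rcases h' with h1 | h1
    · have hx : x.head? = some z := by
        by_contra hx; simp [hx] at h1
      rw [if_pos hx] at h1
      obtain ⟨x0, xs, rfl⟩ : ∃ x0 xs, x = x0 :: xs := by
        cases x with
        | nil => simp at hx
        | cons a l => exact ⟨a, l, rfl⟩
      simp only [List.head?_cons, Option.some.injEq] at hx
      subst hx
      have := ih xs y (by simpa using h1)
      rw [← Multiset.cons_coe, ← Multiset.cons_coe, ← this]
      simp [Multiset.cons_add]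
    · have hy : y.head? = some z := by
        by_contra hy; simp [hy] at h1
      rw [if_pos hy] at h1
      obtain ⟨y0, ys, rfl⟩ : ∃ y0 ys, y = y0 :: ys := by
        cases y with
        | nil => simp at hy
        | cons a l => exact ⟨a, l, rfl⟩
      simp only [List.head?_cons, Option.some.injEq] at hy
      subst hy
      have := ih x ys (by simpa using h1)
      rw [← Multiset.cons_coe, ← Multiset.cons_coe]
      rw [← this]
      simp [Multiset.add_cons]

end LstarAux
namespace LstarAux

variable {A : Type*} [DecidableEq A]

omit [DecidableEq A] in
lemma take_add_drop_ms (p : List A) (d : ℕ) :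
    ((p.take d : Multiset A)) + ((p.drop d : Multiset A)) = (p : Multiset A) := by
  rw [Multiset.coe_add, List.take_append_drop]

lemma Sh_count_base (p r : List A)
    (MC : ∀ j, 1 ≤ j → j ≤ p.length → j ≤ r.length →
      ((p.take j : Multiset A)) ≠ ((r.drop (r.length - j) : Multiset A)))
    (d e : ℕ) (hde : r.length ≤ d + e) (hd : d ≤ p.length) :
    Sh (p.drop d) (r.drop e) (r.drop (d + e) ++ p) = if d = 0 then 1 else 0 := by
  rw [List.drop_of_length_le hde, List.nil_append]
  rcases Nat.eq_zero_or_pos d with rfl | hdpos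
  · rw [List.drop_of_length_le (show r.length ≤ e by omega), List.drop_zero, if_pos rfl]
    exact Sh_self p
  · rw [if_neg (by omega)]
    by_contra h
    have hmul := Sh_multiset p (p.drop d) (r.drop e) h
    have hre : ((r.drop e : Multiset A)) = ((p.take d : Multiset A)) := by
      have h2 : ((p.take d : Multiset A)) + ((p.drop d : Multiset A))
          = ((r.drop e : Multiset A)) + ((p.drop d : Multiset A)) := by
        rw [take_add_drop_ms, ← hmul]; exact add_comm _ _
      exact (add_right_cancel h2).symm
    have hlen : r.length - e = d := by
      have hc := congrArg Multiset.card hre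
      simp only [Multiset.coe_card, List.length_drop, List.length_take] at hc
      omega
    exact MC d (by omega) hd (by omega) (by rw [← hre, show r.length - d = e by omega])

lemma Sh_count_aux (p r : List A)
    (MC : ∀ j, 1 ≤ j → j ≤ p.length → j ≤ r.length →
      ((p.take j : Multiset A)) ≠ ((r.drop (r.length - j) : Multiset A))) :
    ∀ N d e, r.length ≤ d + e + N → d ≤ p.length →
      Sh (p.drop d) (r.drop e) (r.drop (d + e) ++ p) = if d = 0 then 1 else 0 := by
  intro N
  induction N with
  | zero =>
    intro d e hN hd
    exact Sh_count_base p r MC d e (by omega) hd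
  | succ N ih =>
    intro d e hN hd
    by_cases hde : r.length ≤ d + e
    · exact Sh_count_base p r MC d e hde hd
    · push_neg at hde
      rw [List.drop_eq_getElem_cons hde]
      show Sh (p.drop d) (r.drop e) ((r[d+e]'(by omega)) :: (r.drop (d+e+1) ++ p)) = _
      rw [Sh]
      have hterm1 : (if (p.drop d).head? = some (r[d+e]'(by omega)) then
          Sh (p.drop d).tail (r.drop e) (r.drop (d+e+1) ++ p) else 0) = 0 := by
        split
        · rename_i hhead
          have hdlt : d < p.length := by
            by_contra hc
            rw [List.drop_of_length_le (by omega)] at hhead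
            simp at hhead
          rw [List.tail_drop]
          have h2 := ih (d+1) e (by omega) (by omega)
          rw [show d + 1 + e = d + e + 1 by omega] at h2
          rw [h2, if_neg (by omega)]
        · rfl
      rw [hterm1, zero_add]
      have hhead2 : (r.drop e).head? = some (r[e]'(by omega)) := by
        rw [List.head?_drop]
        exact List.getElem?_eq_getElem (by omega)
      rw [hhead2]
      rcases Nat.eq_zero_or_pos d with rfl | hdpos
      · have h2 := ih 0 (e+1) (by omega) (by omega)
        simp only [Nat.zero_add] at h2 ⊢
        simp only [List.tail_drop]
        simpa using h2
      · rw [show (if d = 0 then (1:ℕ) else 0) = 0 by rw [if_neg (by omega)]]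
        rcases eq_or_ne (r[e]'(by omega)) (r[d+e]'(by omega)) with hc | hc
        · rw [if_pos (by rw [hc])]
          have h2 := ih d (e+1) (by omega) hd
          rw [show d + (e+1) = d + e + 1 by omega] at h2
          rw [List.tail_drop, h2, if_neg (by omega)]
        · rw [if_neg (by simpa using hc)]

lemma Sh_count (p r : List A)
    (MC : ∀ j, 1 ≤ j → j ≤ p.length → j ≤ r.length →
      ((p.take j : Multiset A)) ≠ ((r.drop (r.length - j) : Multiset A))) :
    Sh p r (r ++ p) = 1 := by
  have h := Sh_count_aux p r MC r.length 0 0 (by omega) (by omega)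
  simpa using h

end LstarAux
namespace LstarAux

variable {K : Type*} [CommRing K] {A : Type*} [DecidableEq A]

lemma mul_word_concat (f : MonoidAlgebra K (FreeMonoid A)) (b : A) (u : List A) :
    (f * word K [b]).coeff (FreeMonoid.ofList (u ++ [b])) = f.coeff (FreeMonoid.ofList u) := by
  have h := MonoidAlgebra.coeff_mul_single_eq_coeff_mul (R := K) (x := f) (r := 1)
    (m := FreeMonoid.ofList [b]) (m₂ := FreeMonoid.ofList u)
    (m₁ := FreeMonoid.ofList (u ++ [b])) ?_
  · rw [word]
    rw [h, mul_one]
  · intro a _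
    constructor
    · intro ha
      have : (FreeMonoid.toList a) ++ [b] = u ++ [b] := by
        have := congrArg FreeMonoid.toList ha
        simpa [FreeMonoid.toList_mul] using this
      have h2 := (List.append_left_inj [b]).mp this
      apply FreeMonoid.toList.injective
      simpa using h2
    · rintro rfl
      rfl

lemma mul_word_ne (f : MonoidAlgebra K (FreeMonoid A)) (b z : A) (hz : z ≠ b) (u : List A) :
    (f * word K [b]).coeff (FreeMonoid.ofList (u ++ [z])) = 0 := by
  rw [word]
  apply MonoidAlgebra.mul_single_apply_of_not_exists_mul
  rintro ⟨d, hd⟩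
  have h := congrArg FreeMonoid.toList hd
  simp only [FreeMonoid.toList_mul, FreeMonoid.toList_ofList] at h
  have h1 : (u ++ [z]).getLast? = some z := List.getLast?_concat
  have h2 : ((FreeMonoid.toList d) ++ [b]).getLast? = some b := List.getLast?_concat
  rw [h, h2] at h1
  exact hz (by simpa using h1.symm)

lemma mul_word_nil (f : MonoidAlgebra K (FreeMonoid A)) (b : A) :
    (f * word K [b]).coeff (FreeMonoid.ofList []) = 0 := by
  rw [word]
  apply MonoidAlgebra.mul_single_apply_of_not_exists_mul
  rintro ⟨d, hd⟩
  have h := congrArg (fun x => (FreeMonoid.toList x).length) hd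
  simp [FreeMonoid.toList_mul] at h

lemma lstar_cons_concat (x z : A) (m : List A) :
    lstar K (x :: (m ++ [z])) = lstar K (x :: m) * word K [z]
      - lstar K (m ++ [z]) * word K [x] := by
  cases m with
  | nil =>
    show lstar K [x, z] = _
    conv_lhs => rw [lstar]
    simp
  | cons b m' =>
    rw [List.cons_append, lstar.eq_3]
    have e1 : (b :: (m' ++ [z])).dropLast = b :: m' := by
      rw [← List.cons_append]; exact List.dropLast_concat
    have e2 : (b :: (m' ++ [z])).getLast (by simp) = z := by
      have h1 : (b :: (m' ++ [z])).getLast? = some z := by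
        rw [← List.cons_append]; exact List.getLast?_concat
      rw [List.getLast?_eq_some_getLast (by simp)] at h1
      exact Option.some_injective _ h1
    rw [e1]
    congr 2
    rw [e2]

lemma lstar_apply_concat (x z' : A) (m : List A) (u : List A) (z : A) :
    (lstar K (x :: (m ++ [z']))).coeff (FreeMonoid.ofList (u ++ [z])) =
      (if z = z' then (lstar K (x :: m)).coeff (FreeMonoid.ofList u) else 0)
      - (if z = x then (lstar K (m ++ [z'])).coeff (FreeMonoid.ofList u) else 0) := by
  rw [lstar_cons_concat, MonoidAlgebra.coeff_sub, Finsupp.sub_apply]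
  congr 1
  · split
    · rename_i h; subst h; exact mul_word_concat _ _ _
    · exact mul_word_ne _ _ _ (by assumption) _
  · split
    · rename_i h; subst h; exact mul_word_concat _ _ _
    · exact mul_word_ne _ _ _ (by assumption) _

lemma lstar_apply_nil (w : List A) :
    (lstar K w).coeff (FreeMonoid.ofList []) = 0 := by
  match w with
  | [] => rw [lstar]; rfl
  | [b] =>
    rw [lstar, word]
    rw [MonoidAlgebra.coeff_single, Finsupp.single_eq_of_ne]
    intro h
    have := congrArg (fun x => (FreeMonoid.toList x).length) h
    simp at this
  | b :: c :: r =>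
    obtain ⟨m, z', hm⟩ := ((c :: r).eq_nil_or_concat).resolve_left (by simp)
    rw [List.concat_eq_append] at hm
    rw [hm, lstar_cons_concat, MonoidAlgebra.coeff_sub, Finsupp.sub_apply, mul_word_nil, mul_word_nil, sub_zero]

end LstarAux
namespace LstarAux

variable {K : Type*} [CommRing K] {A : Type*} [DecidableEq A]

lemma peel (a : A) : ∀ (v P Q : List A), a ∉ P → a ∉ Q → a ∉ v →
    (lstar K (P ++ a :: Q)).coeff (FreeMonoid.ofList (a :: v))
      = (-1 : K) ^ P.length * ((Sh P Q.reverse v.reverse : ℕ) : K) := by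
  intro v
  induction v using List.reverseRecOn with
  | nil =>
    intro P Q hP hQ _
    by_cases hPn : P = []
    · by_cases hQn : Q = []
      · subst hPn; subst hQn
        show (lstar K [a]).coeff (FreeMonoid.ofList [a]) = _
        rw [lstar, word, MonoidAlgebra.coeff_single, Finsupp.single_eq_same]
        simp [Sh]
      · obtain ⟨Q', q, hQ'⟩ := Q.eq_nil_or_concat.resolve_left hQn
        rw [List.concat_eq_append] at hQ'
        subst hQ'; subst hPn
        have haq : a ≠ q := by simp at hQ; tauto
        rw [show ([] : List A) ++ a :: (Q' ++ [q]) = a :: (Q' ++ [q]) from rfl,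
          show FreeMonoid.ofList [a] = FreeMonoid.ofList ([] ++ [a]) from rfl,
          lstar_apply_concat, if_neg haq, if_pos rfl, lstar_apply_nil]
        simp [Sh]
    · obtain ⟨p₀, P', hP'⟩ := List.exists_cons_of_ne_nil hPn
      subst hP'
      have hap : a ≠ p₀ := by simp at hP; tauto
      by_cases hQn : Q = []
      · subst hQn
        rw [show (p₀ :: P') ++ a :: [] = p₀ :: (P' ++ [a]) by simp,
          show FreeMonoid.ofList [a] = FreeMonoid.ofList ([] ++ [a]) from rfl,
          lstar_apply_concat, if_pos rfl, if_neg hap, lstar_apply_nil]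
        simp [Sh]
      · obtain ⟨Q', q, hQ'⟩ := Q.eq_nil_or_concat.resolve_left hQn
        rw [List.concat_eq_append] at hQ'
        subst hQ'
        have haq : a ≠ q := by simp at hQ; tauto
        rw [show (p₀ :: P') ++ a :: (Q' ++ [q]) = p₀ :: ((P' ++ a :: Q') ++ [q]) by simp,
          show FreeMonoid.ofList [a] = FreeMonoid.ofList ([] ++ [a]) from rfl,
          lstar_apply_concat, if_neg haq, if_neg hap]
        simp [Sh]
  | append_singleton v' z ih =>
    intro P Q hP hQ hv
    have hza : z ≠ a := by simp at hv; tauto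
    have hav' : a ∉ v' := by simp at hv; tauto
    rw [show (v' ++ [z]).reverse = z :: v'.reverse by simp]
    by_cases hPn : P = []
    · by_cases hQn : Q = []
      · subst hPn; subst hQn
        show (lstar K [a]).coeff (FreeMonoid.ofList (a :: (v' ++ [z]))) = _
        rw [lstar, word, MonoidAlgebra.coeff_single, Finsupp.single_eq_of_ne, Sh]
        · simp [Sh]
        · intro hcon
          have := congrArg (fun x => (FreeMonoid.toList x).length) hcon
          simp at this
      · obtain ⟨Q', q, hQ'⟩ := Q.eq_nil_or_concat.resolve_left hQn
        rw [List.concat_eq_append] at hQ'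
        subst hQ'; subst hPn
        have hQ'' : a ∉ Q' := by simp at hQ; tauto
        rw [show ([] : List A) ++ a :: (Q' ++ [q]) = a :: (Q' ++ [q]) from rfl,
          show a :: (v' ++ [z]) = (a :: v') ++ [z] from rfl,
          lstar_apply_concat, if_neg hza, sub_zero,
          show (Q' ++ [q]).reverse = q :: Q'.reverse by simp, Sh]
        simp only [List.head?_nil, List.head?_cons, List.tail_cons, reduceCtorEq,
          if_false, Nat.zero_add, List.length_nil, pow_zero, one_mul]
        by_cases hzq : z = q
        · subst hzq
          erw [if_pos rfl, if_pos rfl]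
          have IH1 := ih ([] : List A) Q' (by simp) hQ'' hav'
          rw [show ([] : List A) ++ a :: Q' = a :: Q' from rfl] at IH1
          rw [IH1]
          simp
        · erw [if_neg hzq, if_neg (by simpa using (Ne.symm hzq))]
          simp
    · obtain ⟨p₀, P', hP'⟩ := List.exists_cons_of_ne_nil hPn
      subst hP'
      have hap : a ∉ P' := by simp at hP; tauto
      have hap0 : a ≠ p₀ := by simp at hP; tauto
      by_cases hQn : Q = []
      · subst hQn
        rw [show (p₀ :: P') ++ a :: [] = p₀ :: (P' ++ [a]) by simp,
          show a :: (v' ++ [z]) = (a :: v') ++ [z] from rfl,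
          lstar_apply_concat, if_neg hza, zero_sub,
          show ([] : List A).reverse = [] from rfl, Sh]
        simp only [List.head?_nil, List.head?_cons, List.tail_cons, reduceCtorEq,
          if_false, Nat.add_zero]
        by_cases hzp : z = p₀
        · subst hzp
          erw [if_pos rfl, if_pos rfl]
          have IH1 := ih P' ([] : List A) hap (by simp) hav'
          rw [show P' ++ a :: ([] : List A) = P' ++ [a] from rfl] at IH1
          rw [IH1]
          simp only [List.reverse_nil, List.length_cons, pow_succ]
          push_cast
          ring
        · erw [if_neg hzp, if_neg (by simpa using (Ne.symm hzp))]
          simp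
      · obtain ⟨Q', q, hQ'⟩ := Q.eq_nil_or_concat.resolve_left hQn
        rw [List.concat_eq_append] at hQ'
        subst hQ'
        have hQ'' : a ∉ Q' := by simp at hQ; tauto
        have haq : a ≠ q := by simp at hQ; tauto
        rw [show (p₀ :: P') ++ a :: (Q' ++ [q]) = p₀ :: ((P' ++ a :: Q') ++ [q]) by simp,
          show a :: (v' ++ [z]) = (a :: v') ++ [z] from rfl,
          lstar_apply_concat,
          show (Q' ++ [q]).reverse = q :: Q'.reverse by simp, Sh]
        simp only [List.head?_cons, List.tail_cons]
        have IH1 := ih (p₀ :: P') Q' (by simp; tauto) hQ'' hav'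
        simp only [List.cons_append] at IH1
        have IH2 := ih P' (Q' ++ [q]) hap (by simp; tauto) hav'
        rw [show (Q' ++ [q]).reverse = q :: Q'.reverse by simp] at IH2
        have hL2 : (P' ++ a :: Q') ++ [q] = P' ++ a :: (Q' ++ [q]) := by simp
        rw [hL2, IH2, IH1]
        by_cases hzq : z = q <;> by_cases hzp : z = p₀
        · erw [if_pos hzq, if_pos hzp, if_pos (by rw [hzp]), if_pos (by rw [hzq])]
          simp only [List.length_cons, pow_succ]
          push_cast
          ring
        · erw [if_pos hzq, if_neg hzp,
            if_neg (by simp only [Option.some.injEq]; exact fun h => hzp h.symm),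
            if_pos (by rw [hzq])]
          simp only [List.length_cons, pow_succ]
          push_cast
          ring
        · erw [if_neg hzq, if_pos hzp, if_pos (by rw [hzp]),
            if_neg (by simp only [Option.some.injEq]; exact fun h => hzq h.symm)]
          simp only [List.length_cons, pow_succ]
          push_cast
          ring
        · erw [if_neg hzq, if_neg hzp,
            if_neg (by simp only [Option.some.injEq]; exact fun h => hzp h.symm),
            if_neg (by simp only [Option.some.injEq]; exact fun h => hzq h.symm)]
          simp

end LstarAux
namespace LstarAux

variable {A : Type*} [DecidableEq A]

lemma card_le_count (x : A) : ∀ (w : List A) (S : Finset ℕ),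
    (∀ i ∈ S, w[i]? = some x) → S.card ≤ w.count x := by
  intro w
  induction w with
  | nil =>
    intro S hS
    have : S = ∅ := by
      apply Finset.eq_empty_of_forall_notMem
      intro i hi
      have := hS i hi
      simp at this
    simp [this]
  | cons c w' ih =>
    intro S hS
    set S' : Finset ℕ := (S.erase 0).image (· - 1) with hS'def
    have hinj : Set.InjOn (· - 1) (S.erase 0) := by
      intro i hi j hj hij
      have hi0 : i ≠ 0 := (Finset.mem_erase.mp hi).1
      have hj0 : j ≠ 0 := (Finset.mem_erase.mp hj).1
      simp only at hij
      omega
    have hcard' : S'.card = (S.erase 0).card := Finset.card_image_of_injOn hinj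
    have hS'mem : ∀ i ∈ S', w'[i]? = some x := by
      intro i hi
      obtain ⟨j, hj, rfl⟩ := Finset.mem_image.mp hi
      have hj0 : j ≠ 0 := (Finset.mem_erase.mp hj).1
      have hjS : j ∈ S := (Finset.mem_erase.mp hj).2
      have := hS j hjS
      rw [show j = (j - 1) + 1 by omega] at this
      simpa using this
    have hIH := ih S' hS'mem
    rw [List.count_cons]
    by_cases h0 : 0 ∈ S
    · have hcx : c = x := by
        have := hS 0 h0
        simpa using this
      have : S.card = (S.erase 0).card + 1 := by
        rw [Finset.card_erase_of_mem h0]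
        have : 1 ≤ S.card := Finset.card_pos.mpr ⟨0, h0⟩
        omega
      simp only [hcx, beq_self_eq_true, if_true]
      omega
    · have : S.erase 0 = S := Finset.erase_eq_of_notMem h0
      rw [this] at hcard'
      split <;> omega

lemma claimE (w : List A) (hv : w.length + 2 ≤ 2 * w.toFinset.card) :
    ∃ i, ∃ hi : i < w.length,
      w.count (w[i]'hi) = 1 ∧
      ∀ j, 1 ≤ j → j ≤ i → i + 1 + j ≤ w.length →
        ((w.take j : Multiset A)) ≠ (((w.drop (i+1)).take j : Multiset A)) := by
  by_contra hcon
  push_neg at hcon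
  -- hcon : ∀ i (hi), count = 1 → ∃ j, 1 ≤ j ∧ j ≤ i ∧ i+1+j ≤ n ∧ multisets equal
  have hne : w ≠ [] := by
    rintro rfl
    simp at hv
  have h0 : 0 < w.length := List.length_pos_iff.mpr hne
  set n := w.length with hn
  set x := w[0]'h0 with hx
  set T1 := w.toFinset.filter (fun b => w.count b = 1) with hT1
  set T2 := w.toFinset.filter (fun b => ¬ w.count b = 1) with hT2
  -- x has count ≥ 2
  have hx_mem : x ∈ w := List.getElem_mem h0
  have hxcount : w.count x ≠ 1 := by
    intro hcx
    obtain ⟨j, hj1, hj2, _, _⟩ := hcon 0 h0 hcx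
    omega
  have hx2 : 2 ≤ w.count x := by
    have : 0 < w.count x := List.count_pos_iff.mpr hx_mem
    omega
  -- window positions
  have hgood : ∀ b ∈ T1, ∃ ℓ, ∃ i j, i < n ∧ w[i]? = some b ∧ 1 ≤ j ∧ j ≤ i ∧
      i + 1 + j ≤ n ∧ i < ℓ ∧ ℓ ≤ i + j ∧ w[ℓ]? = some x ∧
      (∀ m c, i < m → m ≤ i + j → w[m]? = some c → 2 ≤ w.count c) := by
    intro b hb
    rw [hT1, Finset.mem_filter, List.mem_toFinset] at hb
    obtain ⟨hbw, hbcount⟩ := hb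
    obtain ⟨i, hi, hib⟩ := List.getElem_of_mem hbw
    have hcnt : w.count (w[i]'hi) = 1 := by rw [hib]; exact hbcount
    obtain ⟨j, hj1, hj2, hj3, hMS⟩ := hcon i hi hcnt
    -- x is in the window
    have hxtake : x ∈ w.take j := by
      have hlen : 0 < (w.take j).length := by
        rw [List.length_take]
        omega
      have hh : (w.take j)[0]'hlen = x := by rw [hx]; exact List.getElem_take
      exact hh ▸ List.getElem_mem hlen
    have hxwin : x ∈ (w.drop (i+1)).take j := by
      have : x ∈ ((w.take j : Multiset A)) := Multiset.mem_coe.mpr hxtake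
      rw [hMS] at this
      exact Multiset.mem_coe.mp this
    obtain ⟨m, hm, hmx⟩ := List.getElem_of_mem hxwin
    have hmlen : m < j := by
      have := hm
      rw [List.length_take, List.length_drop] at this
      omega
    have hmn : i + 1 + m < n := by
      have := hm
      rw [List.length_take, List.length_drop] at this
      omega
    have hwm : w[i+1+m]'(hmn) = x := by
      rw [← hmx, List.getElem_take, List.getElem_drop]
    refine ⟨i + 1 + m, i, j, hi, (by rw [List.getElem?_eq_getElem hi, hib]),
      hj1, hj2, hj3, by omega, by omega, ?_, ?_⟩
    · rw [List.getElem?_eq_getElem hmn, hwm]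
    · intro m' c hm'1 hm'2 hm'c
      have hm'n : m' < n := by omega
      rw [List.getElem?_eq_getElem hm'n] at hm'c
      have hc : w[m']'hm'n = c := by injection hm'c
      -- c occurs in the window, hence in take j, and also in drop j
      have hidx : m' - (i+1) < ((w.drop (i+1)).take j).length := by
        rw [List.length_take, List.length_drop]
        omega
      have hcwin : c ∈ (w.drop (i+1)).take j := by
        have hval : ((w.drop (i+1)).take j)[m' - (i+1)]'hidx = c := by
          rw [List.getElem_take, List.getElem_drop, ← hc]
          congr 1
          omega
        exact hval ▸ List.getElem_mem hidx
      have hctake : c ∈ w.take j := by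
        have : c ∈ (((w.drop (i+1)).take j : Multiset A)) := Multiset.mem_coe.mpr hcwin
        rw [← hMS] at this
        exact Multiset.mem_coe.mp this
      have hcdrop : c ∈ w.drop j := by
        have hidx2 : m' - j < (w.drop j).length := by
          rw [List.length_drop]; omega
        have hval2 : (w.drop j)[m' - j]'hidx2 = c := by
          rw [List.getElem_drop, ← hc]
          congr 1
          omega
        exact hval2 ▸ List.getElem_mem hidx2
      have : w.count c = (w.take j).count c + (w.drop j).count c := by
        rw [← List.count_append, List.take_append_drop]
      have h1 : 0 < (w.take j).count c := List.count_pos_iff.mpr hctake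
      have h2 : 0 < (w.drop j).count c := List.count_pos_iff.mpr hcdrop
      omega
  -- choose ψ
  have hgood' : ∀ b, ∃ ℓ, b ∈ T1 → ∃ i j, i < n ∧ w[i]? = some b ∧ 1 ≤ j ∧ j ≤ i ∧
      i + 1 + j ≤ n ∧ i < ℓ ∧ ℓ ≤ i + j ∧ w[ℓ]? = some x ∧
      (∀ m c, i < m → m ≤ i + j → w[m]? = some c → 2 ≤ w.count c) := by
    intro b
    by_cases hb : b ∈ T1
    · exact (hgood b hb).imp (fun ℓ h _ => h)
    · exact ⟨0, fun h => absurd h hb⟩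
  choose ψ hψ using hgood'
  -- injectivity
  have hinj : Set.InjOn ψ T1 := by
    intro b hbs b' hbs' heq
    have hb : b ∈ T1 := hbs
    have hb' : b' ∈ T1 := hbs'
    by_contra hbb
    obtain ⟨i, j, hi, hib, hj1, hj2, hj3, hℓ1, hℓ2, hℓx, hwin⟩ := hψ b hb
    obtain ⟨i', j', hi', hib', hj1', hj2', hj3', hℓ1', hℓ2', hℓx', hwin'⟩ := hψ b' hb'
    have hii' : i ≠ i' := by
      intro h
      subst h
      rw [hib] at hib'
      exact hbb (by injection hib')
    have hcb : w.count b = 1 := by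
      rw [hT1, Finset.mem_filter] at hb; exact hb.2
    have hcb' : w.count b' = 1 := by
      rw [hT1, Finset.mem_filter] at hb'; exact hb'.2
    rcases Nat.lt_or_ge i i' with hlt | hge
    · -- i < i' : i' not in window of b
      have : ¬ (i < i' ∧ i' ≤ i + j) := by
        rintro ⟨h1, h2⟩
        have := hwin i' b' h1 h2 hib'
        omega
      have hsep : i + j < i' := by omega
      have : ψ b < ψ b' := by omega
      omega
    · have hlt : i' < i := by omega
      have : ¬ (i' < i ∧ i ≤ i' + j') := by
        rintro ⟨h1, h2⟩
        have := hwin' i b h1 h2 hib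
        omega
      have hsep : i' + j' < i := by omega
      have : ψ b' < ψ b := by omega
      omega
  -- count x ≥ T1.card + 1
  have hcountx : T1.card + 1 ≤ w.count x := by
    have hmem : ∀ ℓ ∈ insert 0 (T1.image ψ), w[ℓ]? = some x := by
      intro ℓ hℓ
      rcases Finset.mem_insert.mp hℓ with rfl | hℓ'
      · rw [List.getElem?_eq_getElem h0]
      · obtain ⟨b, hb, rfl⟩ := Finset.mem_image.mp hℓ'
        obtain ⟨i, j, _, _, _, _, _, _, _, hℓx, _⟩ := hψ b hb
        exact hℓx
    have h0not : 0 ∉ T1.image ψ := by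
      intro hc
      obtain ⟨b, hb, hb0⟩ := Finset.mem_image.mp hc
      obtain ⟨i, j, _, _, _, _, _, hℓ1, _, _, _⟩ := hψ b hb
      omega
    have hcard : (insert 0 (T1.image ψ)).card = T1.card + 1 := by
      rw [Finset.card_insert_of_notMem h0not, Finset.card_image_of_injOn hinj]
    have := card_le_count x w (insert 0 (T1.image ψ)) hmem
    omega
  -- final counting
  have hsum : ∑ b ∈ w.toFinset, w.count b = n := by
    have := Multiset.toFinset_sum_count_eq (w : Multiset A)
    simpa [hn] using this
  have hsplit : ∑ b ∈ w.toFinset, w.count b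
      = ∑ b ∈ T1, w.count b + ∑ b ∈ T2, w.count b := by
    rw [hT1, hT2]
    exact (Finset.sum_filter_add_sum_filter_not _ _ _).symm
  have hsumT1 : ∑ b ∈ T1, w.count b = T1.card := by
    rw [Finset.card_eq_sum_ones]
    apply Finset.sum_congr rfl
    intro b hb
    rw [hT1, Finset.mem_filter] at hb
    exact hb.2
  have hxT2 : x ∈ T2 := by
    rw [hT2, Finset.mem_filter, List.mem_toFinset]
    exact ⟨hx_mem, hxcount⟩
  have hsumT2 : w.count x + 2 * (T2.card - 1) ≤ ∑ b ∈ T2, w.count b := by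
    rw [← Finset.sum_erase_add _ _ hxT2]
    have h2each : ∀ b ∈ T2.erase x, 2 ≤ w.count b := by
      intro b hb
      have hb2 := (Finset.mem_erase.mp hb).2
      rw [hT2, Finset.mem_filter, List.mem_toFinset] at hb2
      have : 0 < w.count b := List.count_pos_iff.mpr hb2.1
      omega
    have := Finset.card_nsmul_le_sum (T2.erase x) (fun b => w.count b) 2 h2each
    rw [Finset.card_erase_of_mem hxT2] at this
    simp only [smul_eq_mul] at this
    omega
  have hk : w.toFinset.card = T1.card + T2.card := by
    rw [hT1, hT2]
    exact (Finset.card_filter_add_card_filter_not _).symm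
  have hT2pos : 1 ≤ T2.card := Finset.card_pos.mpr ⟨x, hxT2⟩
  omega

end LstarAux
/-- over any (nontrivial) commutative ring `K`, if `l*(w) = 0` then the
number of distinct letters of `w` is at most `⌈|w|/2⌉`. -/
theorem card_alph_le_of_lstar_eq_zero {K : Type*} [CommRing K] [Nontrivial K]
    {A : Type*} [Fintype A] [DecidableEq A] (w : List A) (hw : lstar K w = 0) :
    w.toFinset.card ≤ (w.length + 1) / 2 := by
  by_contra hcard
  push_neg at hcard
  have hv : w.length + 2 ≤ 2 * w.toFinset.card := by omega
  obtain ⟨i, hi, hcount, hMC⟩ := LstarAux.claimE w hv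
  set a := w[i]'hi with ha
  set P := w.take i with hP
  set Q := w.drop (i+1) with hQ
  have hsplit : w = P ++ a :: Q := by
    conv_lhs => rw [← List.take_append_drop i w]
    rw [hP, hQ, ha]
    congr 1
    exact List.drop_eq_getElem_cons hi
  have hcount' : P.count a + (Q.count a + 1) = 1 := by
    have hc := hcount
    rw [hsplit, List.count_append, List.count_cons] at hc
    simpa using hc
  have haP : a ∉ P := by
    rw [← List.count_eq_zero]
    omega
  have haQ : a ∉ Q := by
    rw [← List.count_eq_zero]
    omega
  have hPlen : P.length = i := by
    rw [hP, List.length_take]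
    omega
  have hQlen : Q.length = w.length - (i + 1) := by
    rw [hQ, List.length_drop]
  have hSh : LstarAux.Sh P Q.reverse (Q.reverse ++ P) = 1 := by
    apply LstarAux.Sh_count
    intro j hj1 hjP hjQ
    rw [List.length_reverse] at hjQ
    have hne := hMC j hj1 (by omega) (by omega)
    intro hcontra
    apply hne
    have e1 : P.take j = w.take j := by
      rw [hP, List.take_take, min_eq_left (by omega)]
    have e2 : Q.reverse.drop (Q.reverse.length - j) = (Q.take j).reverse := by
      rw [List.length_reverse]
      exact (List.reverse_take).symm
    rw [e1, e2, Multiset.coe_reverse] at hcontra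
    exact hcontra
  have hav : a ∉ P.reverse ++ Q := by
    simp only [List.mem_append, List.mem_reverse]
    tauto
  have hpeel := LstarAux.peel (K := K) a (P.reverse ++ Q) P Q haP haQ hav
  rw [show (P.reverse ++ Q).reverse = Q.reverse ++ P by simp] at hpeel
  rw [hSh, ← hsplit, hw] at hpeel
  simp only [MonoidAlgebra.coeff_zero, Finsupp.coe_zero, Pi.zero_apply, Nat.cast_one, mul_one] at hpeel
  exact (((isUnit_one.neg).pow P.length).ne_zero) hpeel.symm
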